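/- Let B = B(P¹, O(1), σ) be the twisted homogeneous coordinate ring of the projective line with the automorphism σ(a₀ : a₁) = (q·a₀ : a₁) for q ∈ k*. Then B is isomorphic to the quantum plane k⟨x, y⟩/(xy − q·yx). -/

import Mathlib

open MvPolynomial

/-- The automorphism `σ` of `k[a₀, a₁]` induced by the automorphism
`σ(a₀ : a₁) = (q·a₀ : a₁)` of `ℙ¹`. -/
noncomputable def projLineTwist (k : Type u) [Field k] (q : k) :
    MvPolynomial (Fin 2) k →ₐ[k] MvPolynomial (Fin 2) k :=
  aeval ![C q * X 0, X 1]

/-- The defining relation `xy = q·yx` of the quantum plane. -/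
inductive quantumPlaneRel (k : Type u) [Field k] (q : k) :
    FreeAlgebra k (Fin 2) → FreeAlgebra k (Fin 2) → Prop
  | rel : quantumPlaneRel k q (FreeAlgebra.ι k 0 * FreeAlgebra.ι k 1)
      (q • (FreeAlgebra.ι k 1 * FreeAlgebra.ι k 0))

namespace THCR

variable {k : Type} [Field k] (q : k)

local notation "M" => MvPolynomial (Fin 2) k

lemma deg2 (d : Fin 2 →₀ ℕ) : d.degree = d 0 + d 1 := by
  rw [Finsupp.degree_apply, Finset.sum_subset (Finset.subset_univ d.support)]
  · exact Fin.sum_univ_two d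
  · intro i _ hi
    simpa using hi

lemma sigma_monomial (d : Fin 2 →₀ ℕ) (c : k) :
    projLineTwist k q (monomial d c) = q ^ (d 0) • monomial d c := by
  rw [projLineTwist, aeval_monomial, Finsupp.prod_fintype _ _ (fun i => pow_zero _),
    Fin.prod_univ_two]
  simp only [Matrix.cons_val_zero, Matrix.cons_val_one, Matrix.head_cons, mul_pow, ← C_pow]
  rw [monomial_eq, Finsupp.prod_fintype _ _ (fun i => pow_zero _), Fin.prod_univ_two,
    smul_eq_C_mul, algebraMap_eq]
  ring

lemma sigma_iter_monomial (n : ℕ) (d : Fin 2 →₀ ℕ) (c : k) :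
    (⇑(projLineTwist k q))^[n] (monomial d c) = q ^ (n * d 0) • monomial d c := by
  induction n with
  | zero => simp
  | succ n ih =>
      rw [Function.iterate_succ_apply', ih, map_smul, sigma_monomial, smul_smul, ← pow_add]
      ring_nf

lemma sigma_iter_mul (n : ℕ) (p r : M) :
    (⇑(projLineTwist k q))^[n] (p * r) =
      (⇑(projLineTwist k q))^[n] p * (⇑(projLineTwist k q))^[n] r := by
  induction n with
  | zero => rfl
  | succ n ih =>
      rw [Function.iterate_succ_apply', ih, map_mul,
        ← Function.iterate_succ_apply' (⇑(projLineTwist k q)),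
        ← Function.iterate_succ_apply' (⇑(projLineTwist k q))]

end THCR

namespace THCR2
open THCR
variable {k : Type} [Field k] (q : k)

local notation "M" => MvPolynomial (Fin 2) k

/-- The twisted multiplication on `k[a₀,a₁]`: `a ⬝ b = a * σ^(deg a) b` extended
bilinearly from homogeneous `a`. -/
noncomputable def Phi : M →ₗ[k] M →ₗ[k] M :=
  (basisMonomials (Fin 2) k).constr k fun d =>
    (LinearMap.mulLeft k (monomial d 1)) ∘ₗ ((projLineTwist k q).toLinearMap ^ (d 0 + d 1))

lemma Phi_monomial (d : Fin 2 →₀ ℕ) (c : k) (p : M) :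
    Phi q (monomial d c) p =
      monomial d c * (⇑(projLineTwist k q))^[d 0 + d 1] p := by
  have h1 : (monomial d c : M) = c • monomial d 1 := by
    rw [smul_monomial, smul_eq_mul, mul_one]
  have h2 : (monomial d 1 : M) = basisMonomials (Fin 2) k d := by
    rw [coe_basisMonomials]
  rw [h1, map_smul, LinearMap.smul_apply, h2, Phi, Module.Basis.constr_basis]
  simp only [LinearMap.coe_comp, Function.comp_apply, LinearMap.mulLeft_apply,
    Module.End.pow_apply]
  rw [smul_mul_assoc, ← h2]
  rfl

lemma Phi_mon_mon (d e : Fin 2 →₀ ℕ) (c c' : k) :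
    Phi q (monomial d c) (monomial e c') =
      monomial (d + e) (c * c' * q ^ ((d 0 + d 1) * e 0)) := by
  rw [Phi_monomial, sigma_iter_monomial, mul_smul_comm, monomial_mul, smul_monomial]
  congr 1
  rw [smul_eq_mul]
  ring

lemma Phi_assoc (a b c : M) : Phi q (Phi q a b) c = Phi q a (Phi q b c) := by
  induction a using MvPolynomial.induction_on' with
  | add p r hp hr => simp [map_add, LinearMap.add_apply, hp, hr]
  | monomial d ca =>
    induction b using MvPolynomial.induction_on' with
    | add p r hp hr => simp [map_add, LinearMap.add_apply, hp, hr]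
    | monomial e cb =>
      induction c using MvPolynomial.induction_on' with
      | add p r hp hr => simp [map_add, hp, hr]
      | monomial f cc =>
        rw [Phi_mon_mon, Phi_mon_mon, Phi_mon_mon, Phi_mon_mon, add_assoc]
        congr 1
        simp only [Finsupp.add_apply]
        ring

end THCR2

namespace THCR3
noncomputable section
open THCR THCR2

/-- The twisted homogeneous coordinate ring `B(ℙ¹, 𝒪(1), σ)` as a type:
the polynomial ring `k[a₀,a₁]` with twisted multiplication. -/
structure TB (k : Type) [Field k] (q : k) where toPoly : MvPolynomial (Fin 2) k

namespace TB

variable {k : Type} [Field k] {q : k}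

lemma toPoly_injective : Function.Injective (toPoly : TB k q → MvPolynomial (Fin 2) k) :=
  fun a b h => by cases a; cases b; simpa using h

instance : Zero (TB k q) := ⟨⟨0⟩⟩
instance : Add (TB k q) := ⟨fun a b => ⟨a.toPoly + b.toPoly⟩⟩
instance : Neg (TB k q) := ⟨fun a => ⟨-a.toPoly⟩⟩
instance : Sub (TB k q) := ⟨fun a b => ⟨a.toPoly - b.toPoly⟩⟩
instance : SMul ℕ (TB k q) := ⟨fun n a => ⟨n • a.toPoly⟩⟩
instance : SMul ℤ (TB k q) := ⟨fun n a => ⟨n • a.toPoly⟩⟩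
instance : SMul k (TB k q) := ⟨fun c a => ⟨c • a.toPoly⟩⟩

instance : AddCommGroup (TB k q) :=
  toPoly_injective.addCommGroup toPoly rfl (fun _ _ => rfl) (fun _ => rfl) (fun _ _ => rfl)
    (fun _ _ => rfl) (fun _ _ => rfl)

instance : Module k (TB k q) :=
  toPoly_injective.module k
    { toFun := toPoly, map_add' := fun _ _ => rfl, map_zero' := rfl } (fun _ _ => rfl)

instance : One (TB k q) := ⟨⟨1⟩⟩
instance : Mul (TB k q) := ⟨fun a b => ⟨Phi q a.toPoly b.toPoly⟩⟩

@[simp] lemma mul_toPoly (a b : TB k q) : (a * b).toPoly = Phi q a.toPoly b.toPoly := rfl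
@[simp] lemma one_toPoly : (1 : TB k q).toPoly = 1 := rfl
@[simp] lemma add_toPoly (a b : TB k q) : (a + b).toPoly = a.toPoly + b.toPoly := rfl
@[simp] lemma smul_toPoly (c : k) (a : TB k q) : (c • a).toPoly = c • a.toPoly := rfl
@[simp] lemma zero_toPoly : (0 : TB k q).toPoly = 0 := rfl

lemma Phi_one (p : MvPolynomial (Fin 2) k) : Phi q (1 : MvPolynomial (Fin 2) k) p = p := by
  have : (1 : MvPolynomial (Fin 2) k) = monomial 0 1 := by rw [monomial_zero', C_1]
  rw [this, Phi_monomial]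
  simp

lemma Phi_one' (p : MvPolynomial (Fin 2) k) : Phi q p (1 : MvPolynomial (Fin 2) k) = p := by
  induction p using MvPolynomial.induction_on' with
  | add p r hp hr => rw [map_add, LinearMap.add_apply, hp, hr]
  | monomial d c =>
    rw [Phi_monomial]
    have : (⇑(projLineTwist k q))^[d 0 + d 1] (1 : MvPolynomial (Fin 2) k) = 1 := by
      have : (1 : MvPolynomial (Fin 2) k) = monomial 0 1 := by
        rw [monomial_zero', C_1]
      rw [this, sigma_iter_monomial]
      simp
    rw [this, mul_one]

instance : Ring (TB k q) :=
  { (inferInstance : AddCommGroup (TB k q)) with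
    mul := (· * ·)
    one := 1
    mul_assoc := fun a b c => toPoly_injective (by simp [Phi_assoc])
    one_mul := fun a => toPoly_injective (by simp [Phi_one])
    mul_one := fun a => toPoly_injective (by simp [Phi_one'])
    left_distrib := fun a b c => toPoly_injective (by simp [map_add])
    right_distrib := fun a b c => toPoly_injective (by simp [map_add, LinearMap.add_apply])
    zero_mul := fun a => toPoly_injective (by simp [map_zero, LinearMap.zero_apply])
    mul_zero := fun a => toPoly_injective (by simp [map_zero]) }

instance : Algebra k (TB k q) :=
  Algebra.ofModule
    (fun c a b => toPoly_injective (by simp [map_smul, LinearMap.smul_apply]))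
    (fun c a b => toPoly_injective (by simp [map_smul]))

/-- The identification of `B` with `k[a₀,a₁]` as a graded vector space. -/
noncomputable def e : TB k q ≃ₗ[k] MvPolynomial (Fin 2) k where
  toFun := toPoly
  invFun := TB.mk
  map_add' := fun _ _ => rfl
  map_smul' := fun _ _ => rfl
  left_inv := fun _ => rfl
  right_inv := fun _ => rfl

end TB
end
end THCR3

namespace THCR5
noncomputable section
open THCR THCR2 THCR3 THCR3.TB

variable {k : Type} [Field k] {q : k}

lemma Phi_homogeneous {m : ℕ} (p : MvPolynomial (Fin 2) k) (hp : p.IsHomogeneous m)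
    (r : MvPolynomial (Fin 2) k) :
    Phi q p r = p * (⇑(projLineTwist k q))^[m] r := by
  conv_lhs => rw [p.as_sum]
  rw [map_sum, LinearMap.coe_sum, Finset.sum_apply]
  rw [Finset.sum_congr rfl (fun d hd => ?_), ← Finset.sum_mul, ← p.as_sum]
  rw [Phi_monomial]
  have hd' : d 0 + d 1 = m := by
    rw [← deg2, Finsupp.degree_eq_weight_one]
    exact hp (mem_support_iff.mp hd)
  rw [hd']
end
end THCR5


namespace THCR6
noncomputable section
open THCR THCR2 THCR3 THCR3.TB THCR5

variable {k : Type} [Field k] (q : kˣ)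

local notation "B" => TB k (q : k)

def x0 : B := ⟨X 0⟩
def x1 : B := ⟨X 1⟩

lemma sigma_X0 : projLineTwist k (q : k) (X 0) = C (q : k) * X 0 := by
  rw [projLineTwist, aeval_X]; rfl

lemma sigma_X1 : projLineTwist k (q : k) (X 1) = X 1 := by
  rw [projLineTwist, aeval_X]; rfl

lemma X_eq_mon (i : Fin 2) : (X i : MvPolynomial (Fin 2) k) = monomial (Finsupp.single i 1) 1 := by
  rw [← X_pow_eq_monomial, pow_one]

lemma Phi_X1 (p : MvPolynomial (Fin 2) k) : Phi (q : k) (X 1) p = X 1 * projLineTwist k (q:k) p := by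
  rw [X_eq_mon, Phi_monomial, ← X_eq_mon]
  norm_num [Finsupp.single_apply]

lemma Phi_X0 (p : MvPolynomial (Fin 2) k) : Phi (q : k) (X 0) p = X 0 * projLineTwist k (q:k) p := by
  rw [X_eq_mon, Phi_monomial, ← X_eq_mon]
  norm_num [Finsupp.single_apply]

/-- The algebra map from the free algebra, sending the quantum plane generators `x, y`
to `x₁ = a₁` and `y ↦ x₀ = a₀`. -/
def F : FreeAlgebra k (Fin 2) →ₐ[k] B := FreeAlgebra.lift k ![x1 q, x0 q]

lemma F_rel : ∀ ⦃a b : FreeAlgebra k (Fin 2)⦄, quantumPlaneRel k (q : k) a b → F q a = F q b := by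
  intro a b h
  cases h
  rw [map_mul, map_smul, map_mul]
  simp only [F, FreeAlgebra.lift_ι_apply, Matrix.cons_val_zero, Matrix.cons_val_one,
    Matrix.head_cons]
  apply toPoly_injective
  show Phi (q:k) (X 1) (X 0) = (q : k) • Phi (q:k) (X 0) (X 1)
  rw [Phi_X1, Phi_X0, sigma_X0, sigma_X1, smul_eq_C_mul]
  ring

def G : RingQuot (quantumPlaneRel k (q : k)) →ₐ[k] B :=
  RingQuot.liftAlgHom k ⟨F q, F_rel q⟩

def xx : RingQuot (quantumPlaneRel k (q : k)) := RingQuot.mkAlgHom k _ (FreeAlgebra.ι k 0)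
def yy : RingQuot (quantumPlaneRel k (q : k)) := RingQuot.mkAlgHom k _ (FreeAlgebra.ι k 1)

lemma xx_yy : xx q * yy q = (q : k) • (yy q * xx q) := by
  have := RingQuot.mkAlgHom_rel k (quantumPlaneRel.rel (k := k) (q := (q : k)))
  rw [map_mul, map_smul, map_mul] at this
  exact this

lemma xx_yy_pow (i : ℕ) : xx q * (yy q) ^ i = ((q : k) ^ i) • ((yy q) ^ i * xx q) := by
  induction i with
  | zero => simp
  | succ i ih =>
      rw [pow_succ', ← mul_assoc, xx_yy, smul_mul_assoc, mul_assoc, ih, mul_smul_comm,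
        smul_smul, pow_succ', mul_assoc]

/-- The span of the PBW monomials `y^i x^j` in the quantum plane. -/
def S : Submodule k (RingQuot (quantumPlaneRel k (q : k))) :=
  Submodule.span k (Set.range fun p : ℕ × ℕ => (yy q) ^ p.1 * (xx q) ^ p.2)

lemma basic_mem_S (i j : ℕ) : (yy q) ^ i * (xx q) ^ j ∈ S q :=
  Submodule.subset_span ⟨(i, j), rfl⟩

lemma xx_mul_S {s} (hs : s ∈ S q) : xx q * s ∈ S q := by
  induction hs using Submodule.span_induction with
  | mem a ha =>
      obtain ⟨⟨i, j⟩, rfl⟩ := ha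
      rw [← mul_assoc, xx_yy_pow, smul_mul_assoc, mul_assoc, ← pow_succ']
      exact Submodule.smul_mem _ _ (basic_mem_S q i (j + 1))
  | zero => rw [mul_zero]; exact zero_mem _
  | add a b _ _ ha hb => rw [mul_add]; exact add_mem ha hb
  | smul c a _ ha => rw [mul_smul_comm]; exact Submodule.smul_mem _ _ ha

lemma yy_mul_S {s} (hs : s ∈ S q) : yy q * s ∈ S q := by
  induction hs using Submodule.span_induction with
  | mem a ha =>
      obtain ⟨⟨i, j⟩, rfl⟩ := ha
      rw [← mul_assoc, ← pow_succ']
      exact basic_mem_S q (i + 1) j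
  | zero => rw [mul_zero]; exact zero_mem _
  | add a b _ _ ha hb => rw [mul_add]; exact add_mem ha hb
  | smul c a _ ha => rw [mul_smul_comm]; exact Submodule.smul_mem _ _ ha

lemma S_eq_top : S q = ⊤ := by
  rw [Submodule.eq_top_iff']
  intro a
  obtain ⟨f, rfl⟩ := RingQuot.mkAlgHom_surjective k (quantumPlaneRel k (q : k)) a
  have key : ∀ f : FreeAlgebra k (Fin 2), ∀ s ∈ S q,
      RingQuot.mkAlgHom k (quantumPlaneRel k (q : k)) f * s ∈ S q := by
    intro f
    induction f using FreeAlgebra.induction with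
    | grade0 r =>
        intro s hs
        rw [AlgHom.commutes, ← Algebra.smul_def]
        exact Submodule.smul_mem _ _ hs
    | grade1 i =>
        intro s hs
        fin_cases i
        · exact xx_mul_S q hs
        · exact yy_mul_S q hs
    | mul f g hf hg =>
        intro s hs
        rw [map_mul, mul_assoc]
        exact hf _ (hg _ hs)
    | add f g hf hg =>
        intro s hs
        rw [map_add, add_mul]
        exact add_mem (hf _ hs) (hg _ hs)
  have h1 : (1 : RingQuot (quantumPlaneRel k (q : k))) ∈ S q := by
    simpa using basic_mem_S q 0 0
  simpa using key f 1 h1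

lemma x1_pow (j : ℕ) : (x1 q) ^ j = (⟨X 1 ^ j⟩ : B) := by
  induction j with
  | zero => rw [pow_zero, pow_zero]; rfl
  | succ j ih =>
      rw [pow_succ', ih]
      apply toPoly_injective
      show Phi (q : k) (X 1) (X 1 ^ j) = X 1 ^ (j + 1)
      rw [Phi_X1, map_pow, sigma_X1, pow_succ']

lemma x0_pow (i : ℕ) : ∃ u : kˣ, (x0 q) ^ i = (u : k) • (⟨X 0 ^ i⟩ : B) := by
  induction i with
  | zero => exact ⟨1, by rw [pow_zero, pow_zero]; apply toPoly_injective; simp⟩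
  | succ i ih =>
      obtain ⟨u, hu⟩ := ih
      refine ⟨u * q ^ i, ?_⟩
      rw [pow_succ', hu]
      apply toPoly_injective
      simp only [x0, mul_toPoly, smul_toPoly]
      rw [map_smul, Phi_X0, map_pow, sigma_X0, mul_pow, ← C_pow, ← smul_eq_C_mul, mul_smul_comm,
        smul_smul]
      rw [pow_succ']
      push_cast
      ring_nf

lemma sigma_iter_X1_pow (n j : ℕ) :
    (⇑(projLineTwist k (q : k)))^[n] ((X 1 : MvPolynomial (Fin 2) k) ^ j) = X 1 ^ j := by
  rw [X_pow_eq_monomial, sigma_iter_monomial]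
  simp [Finsupp.single_apply]

lemma fin2_single (d : Fin 2 →₀ ℕ) :
    Finsupp.single (0 : Fin 2) (d 0) + Finsupp.single 1 (d 1) = d := by
  ext i
  fin_cases i <;> simp [Finsupp.single_apply]

lemma G_basis (d : Fin 2 →₀ ℕ) :
    ∃ u : kˣ, e (G q ((yy q) ^ (d 0) * (xx q) ^ (d 1))) = (u : k) • monomial d 1 := by
  obtain ⟨u, hu⟩ := x0_pow q (d 0)
  refine ⟨u, ?_⟩
  have hy : G q (yy q) = x0 q := by
    rw [yy, G, RingQuot.liftAlgHom_mkAlgHom_apply]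
    simp [F]
  have hx : G q (xx q) = x1 q := by
    rw [xx, G, RingQuot.liftAlgHom_mkAlgHom_apply]
    simp [F]
  rw [map_mul, map_pow, map_pow, hy, hx, hu, x1_pow, smul_mul_assoc]
  show (u : k) • Phi (q : k) (X 0 ^ (d 0)) (X 1 ^ (d 1)) = (u : k) • monomial d 1
  congr 1
  rw [X_pow_eq_monomial (n := (0 : Fin 2)), Phi_monomial]
  have he : (Finsupp.single (0 : Fin 2) (d 0)) 0 + (Finsupp.single (0 : Fin 2) (d 0)) 1 = d 0 := by
    simp [Finsupp.single_apply]
  rw [he, sigma_iter_X1_pow, X_pow_eq_monomial, monomial_mul, one_mul, fin2_single]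

lemma G_bijective : Function.Bijective (G q) := by
  choose u hu using G_basis q
  let θ : RingQuot (quantumPlaneRel k (q : k)) →ₗ[k] MvPolynomial (Fin 2) k :=
    (e.toLinearMap.comp (G q).toLinearMap)
  have hθ : ∀ a, θ a = e (G q a) := fun a => rfl
  let w : (Fin 2 →₀ ℕ) → RingQuot (quantumPlaneRel k (q : k)) :=
    fun d => (((u d)⁻¹ : kˣ) : k) • ((yy q) ^ (d 0) * (xx q) ^ (d 1))
  have hθw : ∀ d, θ (w d) = basisMonomials (Fin 2) k d := by
    intro d
    rw [hθ]
    show e (G q ((((u d)⁻¹ : kˣ) : k) • _)) = _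
    rw [map_smul, map_smul, hu, smul_smul, Units.inv_mul, one_smul, coe_basisMonomials]
  let ρ : MvPolynomial (Fin 2) k →ₗ[k] RingQuot (quantumPlaneRel k (q : k)) :=
    (basisMonomials (Fin 2) k).constr k w
  have hρb : ∀ d, ρ (basisMonomials (Fin 2) k d) = w d := fun d => Module.Basis.constr_basis _ _ _ _
  have h1 : ∀ p, θ (ρ p) = p := by
    intro p
    induction p using MvPolynomial.induction_on' with
    | add a b ha hb => rw [map_add, map_add, ha, hb]
    | monomial d c =>
        have : (monomial d c : MvPolynomial (Fin 2) k) = c • basisMonomials (Fin 2) k d := by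
          rw [coe_basisMonomials]
          rw [smul_monomial, smul_eq_mul, mul_one]
        rw [this, map_smul, map_smul, hρb, hθw]
  have h2 : ∀ a, ρ (θ a) = a := by
    intro a
    have ha : a ∈ S q := (S_eq_top q).symm ▸ Submodule.mem_top
    induction ha using Submodule.span_induction with
    | mem a hmem =>
        obtain ⟨⟨i, j⟩, rfl⟩ := hmem
        show ρ (θ ((yy q) ^ i * (xx q) ^ j)) = (yy q) ^ i * (xx q) ^ j
        set d : Fin 2 →₀ ℕ := Finsupp.single 0 i + Finsupp.single 1 j with hd
        have hd0 : d 0 = i := by simp [hd, Finsupp.single_apply]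
        have hd1 : d 1 = j := by simp [hd, Finsupp.single_apply]
        have haw : (yy q) ^ i * (xx q) ^ j = ((u d : kˣ) : k) • w d := by
          rw [show w d = (((u d)⁻¹ : kˣ) : k) • ((yy q) ^ (d 0) * (xx q) ^ (d 1)) from rfl,
            smul_smul, Units.mul_inv, one_smul, hd0, hd1]
        rw [haw, map_smul, map_smul, hθw, hρb]
    | zero => rw [map_zero, map_zero]
    | add a b _ _ ha hb => rw [map_add, map_add, ha, hb]
    | smul c a _ ha => rw [map_smul, map_smul, ha]
  constructor
  · intro a b hab
    have : θ a = θ b := by rw [hθ, hθ, hab]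
    rw [← h2 a, this, h2 b]
  · intro b
    refine ⟨ρ (e b), ?_⟩
    have := h1 (e b)
    rw [hθ] at this
    exact e.injective this

end
end THCR6

/-- Let `B = B(ℙ¹, 𝒪(1), σ)` be the twisted homogeneous coordinate ring of the
projective line with `σ(a₀ : a₁) = (q·a₀ : a₁)`, `q ∈ k*`.  Then `B` is isomorphic to
the quantum plane `k⟨x, y⟩/(xy − q·yx)`.

Here `B` is encoded by its classical description: a graded `k`-algebra whose degree `n`
part is `H⁰(ℙ¹, 𝒪(n))`, identified `k`-linearly with the space of degree `n`
homogeneous polynomials in `k[a₀, a₁]` (so that, as a graded vector space, `B` is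
identified with `k[a₀, a₁]`), with the twisted multiplication
`a·b = a ⊗ (σ^m)*(b)` for `a ∈ B_m`. -/
theorem twisted_homogeneous_coordinate_ring_P1_iso_quantum_plane
    (k : Type) [Field k] [IsAlgClosed k] (q : kˣ) :
    ∃ (B : Type) (_ : Ring B) (_ : Algebra k B)
      (e : B ≃ₗ[k] MvPolynomial (Fin 2) k),
      e 1 = 1 ∧
      (∀ (m : ℕ) (a b : B), e a ∈ homogeneousSubmodule (Fin 2) k m →
        e (a * b) = e a * ((⇑(projLineTwist k (q : k)))^[m] (e b))) ∧
      Nonempty (RingQuot (quantumPlaneRel k (q : k)) ≃ₐ[k] B) := by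
  refine ⟨THCR3.TB k (q : k), inferInstance, inferInstance, THCR3.TB.e, rfl, ?_, ?_⟩
  · intro m a b hab
    exact THCR5.Phi_homogeneous a.toPoly ((mem_homogeneousSubmodule _ _).mp hab) b.toPoly
  · exact ⟨AlgEquiv.ofBijective (THCR6.G q) (THCR6.G_bijective q)⟩
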